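/- Let b, q ≥ 0, let L be a finite index set with positive weights p_l summing to 1, and for each l let P_l be a probability measure on ℝ with mean m_l and variance σ_l². Let σ_max := max_l σ_l, m_min := min_l m_l, m_max := max_l m_l. Then min over t ∈ ℝ of Σ_l p_l · E_{ξ∼P_l}[q(ξ−t)⁺ + b(t−ξ)⁺] ≤ max(b,q) · ( σ_max + (m_max − m_min)/2 ). -/
import Mathlib

open MeasureTheory in
/-- For a probability measure, (∫ f)² ≤ ∫ f² when f and f² are integrable. -/
lemma sq_int_le {μ : Measure ℝ} [IsProbabilityMeasure μ] {f : ℝ → ℝ}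
    (hf : Integrable f μ) (hf2 : Integrable (fun x => (f x)^2) μ) :
    (∫ x, f x ∂μ)^2 ≤ ∫ x, (f x)^2 ∂μ := by
  set c := ∫ x, f x ∂μ with hc
  have h0 : 0 ≤ ∫ x, (f x - c)^2 ∂μ :=
    integral_nonneg fun x => sq_nonneg _
  have hexp : ∫ x, (f x - c)^2 ∂μ = (∫ x, (f x)^2 ∂μ) - c^2 := by
    have : ∀ x, (f x - c)^2 = (f x)^2 - 2*c*(f x) + c^2 := by intro x; ring
    rw [integral_congr_ae (Filter.Eventually.of_forall this)]
    have e1 : ∫ x, (f x^2 - 2*c*f x + c^2) ∂μ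
        = (∫ x, (f x^2 - 2*c*f x) ∂μ) + ∫ _x, (c^2:ℝ) ∂μ :=
      integral_add (hf2.sub (hf.const_mul _)) (integrable_const _)
    have e2 : ∫ x, (f x^2 - 2*c*f x) ∂μ
        = (∫ x, f x^2 ∂μ) - ∫ x, 2*c*f x ∂μ := integral_sub hf2 (hf.const_mul _)
    rw [e1, e2, integral_const_mul, integral_const]
    simp [← hc]; ring
  linarith [hexp ▸ h0]

open MeasureTheory in
theorem stmt7 {ι : Type*} [Fintype ι] [Nonempty ι] (b q : ℝ) (hb : 0 ≤ b) (hq : 0 ≤ q)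
    (p : ι → ℝ) (hp : ∀ l, 0 < p l) (hsum : ∑ l, p l = 1)
    (P : ι → Measure ℝ) (hP : ∀ l, IsProbabilityMeasure (P l))
    (m σ : ι → ℝ) (hσ : ∀ l, 0 ≤ σ l)
    (hint1 : ∀ l, Integrable (fun x : ℝ => x) (P l))
    (hint2 : ∀ l, Integrable (fun x : ℝ => (x - m l)^2) (P l))
    (hmean : ∀ l, ∫ x, x ∂(P l) = m l)
    (hvar : ∀ l, ∫ x, (x - m l)^2 ∂(P l) = (σ l)^2) :
    ∃ t : ℝ, ∑ l, p l * ∫ ξ, (q * max (ξ - t) 0 + b * max (t - ξ) 0) ∂(P l) ≤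
      max b q * (Finset.univ.sup' Finset.univ_nonempty σ +
        (Finset.univ.sup' Finset.univ_nonempty m -
          Finset.univ.inf' Finset.univ_nonempty m) / 2) := by
  haveI := hP
  set mmax := Finset.univ.sup' Finset.univ_nonempty m with hmmax
  set mmin := Finset.univ.inf' Finset.univ_nonempty m with hmmin
  set smax := Finset.univ.sup' Finset.univ_nonempty σ with hsmax
  set t := (mmin + mmax) / 2 with ht
  refine ⟨t, ?_⟩
  set C := max b q * (smax + (mmax - mmin) / 2) with hC
  have key : ∀ l, (∫ ξ, (q * max (ξ - t) 0 + b * max (t - ξ) 0) ∂(P l)) ≤ C := by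
    intro l
    have hml_le : m l ≤ mmax := Finset.le_sup' m (Finset.mem_univ l)
    have hml_ge : mmin ≤ m l := Finset.inf'_le m (Finset.mem_univ l)
    have hσl : σ l ≤ smax := Finset.le_sup' σ (Finset.mem_univ l)
    have hintm : Integrable (fun x : ℝ => x - m l) (P l) :=
      (hint1 l).sub (integrable_const _)
    have hintam : Integrable (fun x : ℝ => |x - m l|) (P l) := hintm.abs
    -- E|x - m| ≤ σ l
    have habs : (∫ x, |x - m l| ∂(P l)) ≤ σ l := by
      have h1 : (∫ x, |x - m l| ∂(P l))^2 ≤ ∫ x, (|x - m l|)^2 ∂(P l) := by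
        apply sq_int_le hintam
        simpa [sq_abs] using hint2 l
      have h2 : (∫ x, (|x - m l|)^2 ∂(P l)) = (σ l)^2 := by
        rw [← hvar l]; congr 1; ext x; rw [sq_abs]
      have h3 : (0:ℝ) ≤ ∫ x, |x - m l| ∂(P l) :=
        integral_nonneg fun x => abs_nonneg _
      nlinarith [hσ l]
    -- pointwise bound
    have hpt : ∀ x : ℝ, q * max (x - t) 0 + b * max (t - x) 0 ≤
        max b q * (|x - m l| + |m l - t|) := by
      intro x
      have h1 : q * max (x - t) 0 + b * max (t - x) 0 ≤ max b q * |x - t| := by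
        rcases le_total x t with h | h
        · rw [max_eq_right (by linarith), max_eq_left (by linarith),
            abs_of_nonpos (by linarith)]
          nlinarith [le_max_left b q]
        · rw [max_eq_left (by linarith), max_eq_right (by linarith),
            abs_of_nonneg (by linarith)]
          nlinarith [le_max_right b q]
      have h2 : |x - t| ≤ |x - m l| + |m l - t| := by
        calc |x - t| = |(x - m l) + (m l - t)| := by ring_nf
          _ ≤ |x - m l| + |m l - t| := abs_add_le _ _
      calc q * max (x - t) 0 + b * max (t - x) 0 ≤ max b q * |x - t| := h1
        _ ≤ max b q * (|x - m l| + |m l - t|) :=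
          mul_le_mul_of_nonneg_left h2 (le_trans hb (le_max_left b q))
    have hint_lhs : Integrable (fun x : ℝ => q * max (x - t) 0 + b * max (t - x) 0) (P l) := by
      have h1 : Integrable (fun x : ℝ => x - t) (P l) := (hint1 l).sub (integrable_const _)
      have h2 : Integrable (fun x : ℝ => t - x) (P l) := (integrable_const t).sub (hint1 l)
      exact (h1.pos_part.const_mul q).add (h2.pos_part.const_mul b)
    have hint_rhs : Integrable (fun x : ℝ => max b q * (|x - m l| + |m l - t|)) (P l) :=
      ((hintam.add (integrable_const _)).const_mul _)
    have hI : (∫ x, (q * max (x - t) 0 + b * max (t - x) 0) ∂(P l)) ≤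
        ∫ x, max b q * (|x - m l| + |m l - t|) ∂(P l) :=
      integral_mono hint_lhs hint_rhs hpt
    have hR : (∫ x, max b q * (|x - m l| + |m l - t|) ∂(P l)) =
        max b q * ((∫ x, |x - m l| ∂(P l)) + |m l - t|) := by
      rw [integral_const_mul, integral_add hintam (integrable_const _), integral_const]
      simp
    have hmt : |m l - t| ≤ (mmax - mmin) / 2 := by
      rw [abs_le, ht]; exact ⟨by linarith, by linarith⟩
    calc (∫ x, (q * max (x - t) 0 + b * max (t - x) 0) ∂(P l))
        ≤ max b q * ((∫ x, |x - m l| ∂(P l)) + |m l - t|) := by rw [← hR]; exact hI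
      _ ≤ max b q * (smax + (mmax - mmin) / 2) := by
          apply mul_le_mul_of_nonneg_left _ (le_trans hb (le_max_left b q))
          linarith
      _ = C := rfl
  calc (∑ l, p l * ∫ ξ, (q * max (ξ - t) 0 + b * max (t - ξ) 0) ∂(P l))
      ≤ ∑ l, p l * C := by
        apply Finset.sum_le_sum
        intro l _
        exact mul_le_mul_of_nonneg_left (key l) (hp l).le
    _ = C := by rw [← Finset.sum_mul, hsum, one_mul]
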